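/- arXiv:2008.11535 — 2 statements merged into one kernel-verified Lean document; each statement's English description precedes it below -/
import Mathlib

section
/- Let 𝒪 and |·| be the variant Kleene ordinal notation system, and suppose A ⊆ 𝒪 is a nonempty recursively enumerable set closed under the successor notation (n ∈ A implies 2^n ∈ A). Then there exists a notation b ∈ 𝒪 with |b| = sup{|m| : m ∈ A}; in particular sup{|m| + 1 : m ∈ A} < sup{|m| + 1 : m ∈ 𝒪}. -/
open Nat.Partrec (Code)

/-- The `e`-th partial computable function. -/
def phi (e : ℕ) : ℕ →. ℕ := (Denumerable.ofNat Code e).eval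

/-- The variant Kleene ordinal notation system, as the smallest relation between
notations `n : ℕ` and their ordinal values `|n|`:
`0` has value `0`; if `n` has value `o` then `2 ^ n` has value `o + 1`; and if
`φ_e` is total, with values `m k = φ_e k` that are all notations of values `g k`,
then `3 * 5 ^ e` is a notation of value `sup_k |φ_e k| = ⨆ k, g k`. -/
inductive KO : ℕ → Ordinal → Prop
  | zero : KO 0 0
  | succ (n : ℕ) (o : Ordinal) : KO n o → KO (2 ^ n) (o + 1)
  | lim (e : ℕ) (m : ℕ → ℕ) (g : ℕ → Ordinal) :
      (∀ k : ℕ, m k ∈ phi e k) →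
      (∀ k : ℕ, KO (m k) (g k)) →
      KO (3 * 5 ^ e) (⨆ k, g k)

private lemma two_pow_ne_three_five (n e : ℕ) : 2 ^ n ≠ 3 * 5 ^ e := by
  intro h
  rcases Nat.eq_zero_or_pos n with rfl | hn
  · have : 3 ≤ 3 * 5 ^ e := Nat.le_mul_of_pos_right 3 (by positivity)
    simp at h; omega
  · have h2 : 2 ^ n % 2 = 0 := by
      rw [Nat.pow_mod]
      simp [Nat.zero_pow hn]
    have h5 : 5 ^ e % 2 = 1 := by
      rw [Nat.pow_mod]; norm_num
    have h3 : 3 * 5 ^ e % 2 = 1 := by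
      rw [Nat.mul_mod, h5]
    omega

private lemma KO_func_aux {m : ℕ} {o : Ordinal} (h : KO m o) :
    ∀ {m' : ℕ} {o' : Ordinal}, KO m' o' → m = m' → o = o' := by
  induction h with
  | zero =>
    intro m' o' h' hmm
    cases h' with
    | zero => rfl
    | succ n o hn => exact absurd hmm.symm (by positivity : (0:ℕ) < 2 ^ n).ne'
    | lim e m g hm hg => exact absurd hmm.symm (by positivity : (0:ℕ) < 3 * 5 ^ e).ne'
  | succ n o hn ih =>
    intro m' o' h' hmm
    cases h' with
    | zero => exact absurd hmm (by positivity : (0:ℕ) < 2 ^ n).ne'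
    | succ n' o'' hn' =>
      have : n = n' := Nat.pow_right_injective (le_refl 2) hmm
      subst this
      rw [ih hn' rfl]
    | lim e m g hm hg => exact absurd hmm (two_pow_ne_three_five n e)
  | lim e m g hm hg ih =>
    intro m' o' h' hmm
    cases h' with
    | zero => exact absurd hmm (by positivity : (0:ℕ) < 3 * 5 ^ e).ne'
    | succ n o hn => exact absurd hmm.symm (two_pow_ne_three_five n e)
    | lim e' m' g' hm' hg' =>
      have he : e = e' := by
        have : (5:ℕ) ^ e = 5 ^ e' := by omega
        exact Nat.pow_right_injective (by norm_num) this
      subst he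
      have hmm' : ∀ k, m k = m' k := fun k => Part.mem_unique (hm k) (hm' k)
      have : g = g' := by
        funext k
        exact (ih k) (hmm' k ▸ hg' k) rfl
      rw [this]

private lemma KO_func {m : ℕ} {o o' : Ordinal} (h : KO m o) (h' : KO m o') : o = o' :=
  KO_func_aux h h' rfl

/-- If `A ⊆ 𝒪` (with norms given by `ν`) is a nonempty r.e. set closed under the
successor notation, then some notation `b ∈ 𝒪` has `|b| = sup {|m| : m ∈ A}`;
in particular `sup {|m| + 1 : m ∈ A} < sup {|m| + 1 : m ∈ 𝒪}`. -/
theorem exists_notation_sup (A : Set ℕ) (ν : ℕ → Ordinal)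
    (hne : A.Nonempty) (hre : REPred (· ∈ A))
    (hmem : ∀ m ∈ A, KO m (ν m)) (hsucc : ∀ m ∈ A, 2 ^ m ∈ A) :
    (∃ b : ℕ, KO b (sSup (ν '' A))) ∧
      sSup ((fun m => ν m + 1) '' A) <
        sSup {x : Ordinal | ∃ m : ℕ, ∃ o : Ordinal, KO m o ∧ x = o + 1} := by
  classical
  obtain ⟨a₀, ha₀⟩ := hne
  -- the semidecision procedure as a partial function ℕ →. ℕ
  set h : ℕ →. ℕ := fun n => (Part.assert (n ∈ A) fun _ => Part.some ()).map (fun _ => 0)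
    with hh_def
  have hh : Partrec h := hre.map (Computable.const 0).to₂
  have hdom : ∀ n, (h n).Dom ↔ n ∈ A := by
    intro n
    simp [hh_def, Part.assert]
  obtain ⟨c', hc'⟩ := Nat.Partrec.Code.exists_code.1 (Partrec.nat_iff.1 hh)
  -- the total enumerating function
  set f : ℕ → ℕ := fun k =>
    (Nat.Partrec.Code.evaln k.unpair.2 c' k.unpair.1).casesOn a₀ (fun _ => k.unpair.1)
    with hf_def
  have hfA : ∀ k, f k ∈ A := by
    intro k
    simp only [hf_def]
    rcases hev : Nat.Partrec.Code.evaln k.unpair.2 c' k.unpair.1 with _ | y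
    · exact ha₀
    · have : y ∈ (Nat.Partrec.Code.eval c' k.unpair.1) :=
        Nat.Partrec.Code.evaln_sound hev
      rw [hc'] at this
      exact (hdom _).1 this.fst
  have hAf : ∀ n ∈ A, ∃ k, f k = n := by
    intro n hn
    have hd : (h n).Dom := (hdom n).2 hn
    have : (h n).get hd ∈ c'.eval n := by rw [hc']; exact Part.get_mem hd
    obtain ⟨j, hj⟩ := Nat.Partrec.Code.evaln_complete.1 this
    refine ⟨Nat.pair n j, ?_⟩
    simp only [hf_def, Nat.unpair_pair]
    rw [hj]
  -- f is computable
  have hfc : Computable f := by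
    have h1 : Primrec fun k : ℕ => Nat.Partrec.Code.evaln k.unpair.2 c' k.unpair.1 :=
      Nat.Partrec.Code.primrec_evaln.comp
        ((((Primrec.snd.comp Primrec.unpair).pair (Primrec.const c')).pair
          (Primrec.fst.comp Primrec.unpair)))
    have h2 : Primrec f :=
      Primrec.option_casesOn h1 (Primrec.const a₀)
        ((Primrec.fst.comp (Primrec.unpair.comp Primrec.fst)).to₂)
    exact h2.to_comp
  -- get a code for f
  obtain ⟨c, hc⟩ := Nat.Partrec.Code.exists_code.1 (Partrec.nat_iff.1 hfc)
  set e : ℕ := Encodable.encode c with he_def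
  have hphi : phi e = (f : ℕ →. ℕ) := by
    rw [phi, he_def, Denumerable.ofNat_encode, hc]
  -- range f = A
  have hrange : Set.range f = A := by
    ext n
    constructor
    · rintro ⟨k, rfl⟩; exact hfA k
    · intro hn; obtain ⟨k, hk⟩ := hAf n hn; exact ⟨k, hk⟩
  -- the supremum is attained
  have hsup : (⨆ k, ν (f k)) = sSup (ν '' A) := by
    rw [← hrange, ← Set.range_comp]
    rfl
  have hb : KO (3 * 5 ^ e) (sSup (ν '' A)) := by
    rw [← hsup]
    exact KO.lim e f (fun k => ν (f k))
      (fun k => by rw [hphi]; exact Part.mem_some _)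
      (fun k => hmem _ (hfA k))
  constructor
  · exact ⟨3 * 5 ^ e, hb⟩
  · set s := sSup (ν '' A)
    have hb1 : KO (2 ^ (3 * 5 ^ e)) (s + 1) := KO.succ _ _ hb
    have hb2 : KO (2 ^ (2 ^ (3 * 5 ^ e))) (s + 1 + 1) := KO.succ _ _ hb1
    -- the big set is bounded above
    set S : Set Ordinal := {x : Ordinal | ∃ m : ℕ, ∃ o : Ordinal, KO m o ∧ x = o + 1}
    have hS_sub : S ⊆ Set.range (fun m : ℕ =>
        if hm : ∃ o : Ordinal, KO m o then hm.choose + 1 else 0) := by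
      rintro x ⟨m, o, hko, rfl⟩
      refine ⟨m, ?_⟩
      have hm : ∃ o : Ordinal, KO m o := ⟨o, hko⟩
      simp only [dif_pos hm]
      rw [KO_func hm.choose_spec hko]
    have hS_bdd : BddAbove S := @Ordinal.bddAbove_of_small S (small_subset hS_sub)
    have hνA_bdd : BddAbove (ν '' A) :=
      @Ordinal.bddAbove_of_small _ (small_subset (Set.image_subset_range ν A))
    have hmem2 : s + 1 + 1 ∈ S := ⟨2 ^ (3 * 5 ^ e), s + 1, hb1, rfl⟩
    have hge : s + 1 + 1 ≤ sSup S := le_csSup hS_bdd hmem2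
    have hle : sSup ((fun m => ν m + 1) '' A) ≤ s + 1 := by
      apply csSup_le (Set.Nonempty.image _ ⟨a₀, ha₀⟩)
      rintro x ⟨m, hm, rfl⟩
      have : ν m ≤ s := le_csSup hνA_bdd ⟨m, hm, rfl⟩
      exact add_le_add_left this 1
    have hlt : s + 1 < s + 1 + 1 := by
      rw [Ordinal.add_one_eq_succ (s + 1)]
      exact Order.lt_succ _
    exact lt_of_le_of_lt hle (lt_of_lt_of_le hlt hge)
end

section
/- Suppose ≼₁ is a partial order on a set of ordinals (or any linear order) such that between any two elements one can witness finite-pattern reflection: for all α ≤ β, α ≼₁ β holds if and only if for every finite X ⊆ {γ : γ < α} and every finite Y ⊆ {γ : α ≤ γ < β} there exists a finite set Ỹ with X < Ỹ < α and an isomorphism of (X ∪ Ỹ, ≤, ≼₁) with (X ∪ Y, ≤, ≼₁). Then ≼₁ restricted to any subset is transitive: if α ≼₁ β and β ≼₁ γ with α ≤ β ≤ γ, then α ≼₁ γ. -/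
/-- A monotone bijection between two finite-or-infinite sets of ordinals fixes a
common "initial segment" `S` pointwise. -/
lemma fix_of_initial {f : Ordinal → Ordinal} {A B S : Set Ordinal}
    (hbij : Set.BijOn f A B)
    (hmono : ∀ u ∈ A, ∀ w ∈ A, (u ≤ w ↔ f u ≤ f w))
    (hSA : S ⊆ A) (hSB : S ⊆ B)
    (hA : ∀ u ∈ A, u ∉ S → ∀ s ∈ S, s < u)
    (hB : ∀ v ∈ B, v ∉ S → ∀ s ∈ S, s < v) :
    ∀ x ∈ S, f x = x := by
  intro x
  induction x using Ordinal.induction with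
  | h x IH =>
  intro hxS
  have hxA := hSA hxS
  have hfxB := hbij.mapsTo hxA
  have hstrict : ∀ u ∈ A, ∀ w ∈ A, (u < w ↔ f u < f w) := by
    intro u hu w hw
    rw [lt_iff_not_ge, lt_iff_not_ge, hmono w hw u hu]
  rcases lt_trichotomy (f x) x with hlt | heq | hgt
  · have hfxS : f x ∈ S := by
      by_contra hn
      exact absurd (hB _ hfxB hn x hxS) (not_lt.mpr hlt.le)
    have h1 := IH (f x) hlt hfxS
    exact hbij.injOn (hSA hfxS) hxA h1
  · exact heq
  · obtain ⟨u, huA, hux⟩ := hbij.surjOn (hSB hxS)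
    have huS : u ∈ S := by
      by_contra hn
      have hxu := hA u huA hn x hxS
      have h2 := (hstrict x hxA u huA).1 hxu
      rw [hux] at h2
      exact absurd h2 (not_lt.mpr hgt.le)
    rcases lt_trichotomy u x with h1 | h2 | h3
    · have h4 := IH u h1 huS
      rw [h4] at hux
      exact absurd hux (ne_of_lt h1)
    · exact h2 ▸ hux
    · have h4 := (hstrict x hxA u huA).1 h3
      rw [hux] at h4
      exact absurd h4 (not_lt.mpr hgt.le)

/-- If a relation `≼₁` (refining `≤` on the ordinals) satisfies the
finite-pattern reflection characterization — `α ≼₁ β` iff every finite pattern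
`X ∪ Y` with `X < α ≤ Y < β` is isomorphic (as a `(≤, ≼₁)`-structure) to some
`X ∪ Ỹ` with `X < Ỹ < α` — then `≼₁` is transitive along `≤`. -/
theorem transitive_of_reflection (r : Ordinal → Ordinal → Prop)
    (hchar : ∀ a b : Ordinal, a ≤ b →
      (r a b ↔ ∀ (X Y : Finset Ordinal), (∀ x ∈ X, x < a) →
        (∀ y ∈ Y, a ≤ y ∧ y < b) →
        ∃ (Yt : Finset Ordinal) (f : Ordinal → Ordinal),
          (∀ x ∈ X, ∀ y ∈ Yt, x < y) ∧ (∀ y ∈ Yt, y < a) ∧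
          Set.BijOn f ↑(X ∪ Yt) ↑(X ∪ Y) ∧
          (∀ u ∈ X ∪ Yt, ∀ w ∈ X ∪ Yt,
            (u ≤ w ↔ f u ≤ f w) ∧ (r u w ↔ r (f u) (f w))))) :
    ∀ a b c : Ordinal, a ≤ b → b ≤ c → r a b → r b c → r a c := by
  intro a b c hab hbc rab rbc
  rcases eq_or_lt_of_le hab with heq | hab'
  · exact heq ▸ rbc
  refine (hchar a c (hab.trans hbc)).2 ?_
  intro X Y hX hY
  classical
  set Y1 := Y.filter (fun y => y < b) with hY1def
  set Y2 := Y.filter (fun y => ¬ y < b) with hY2def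
  have hYsplit : Y1 ∪ Y2 = Y := Finset.filter_union_filter_not_eq _ Y
  set P : Finset Ordinal := X ∪ {a} ∪ Y1 with hPdef
  have hPb : ∀ x ∈ P, x < b := by
    intro x hx
    simp only [hPdef, Finset.mem_union, Finset.mem_singleton] at hx
    rcases hx with (hx | hx) | hx
    · exact (hX x hx).trans hab'
    · exact hx ▸ hab'
    · exact (Finset.mem_filter.mp hx).2
  have hY2c : ∀ y ∈ Y2, b ≤ y ∧ y < c := by
    intro y hy
    have h := Finset.mem_filter.mp hy
    exact ⟨not_lt.mp h.2, (hY y h.1).2⟩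
  obtain ⟨Yt2, f, hlt1, hltb, hbij1, hiso1⟩ := (hchar b c hbc).1 rbc P Y2 hPb hY2c
  -- f fixes P pointwise
  have hfix : ∀ x ∈ P, f x = x := by
    refine fix_of_initial hbij1 (fun u hu w hw => (hiso1 u (Finset.mem_coe.mp hu)
      w (Finset.mem_coe.mp hw)).1) ?_ ?_ ?_ ?_
    · intro x hx
      simp only [Finset.coe_union, Set.mem_union]
      exact Or.inl hx
    · intro x hx
      simp only [Finset.coe_union, Set.mem_union]
      exact Or.inl hx
    · intro u hu hnu s hs
      simp only [Finset.coe_union, Set.mem_union] at hu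
      rcases hu with hu | hu
      · exact absurd hu hnu
      · exact hlt1 s (Finset.mem_coe.mp hs) u (Finset.mem_coe.mp hu)
    · intro v hv hnv s hs
      simp only [Finset.coe_union, Set.mem_union] at hv
      rcases hv with hv | hv
      · exact absurd hv hnv
      · exact lt_of_lt_of_le (hPb s (Finset.mem_coe.mp hs))
          (hY2c v (Finset.mem_coe.mp hv)).1
  have hYt2a : ∀ y ∈ Yt2, a < y := by
    intro y hy
    exact hlt1 a (by simp [hPdef]) y hy
  -- apply hchar a b to X, Y1 ∪ Yt2
  have hY1Yt2 : ∀ y ∈ Y1 ∪ Yt2, a ≤ y ∧ y < b := by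
    intro y hy
    rcases Finset.mem_union.mp hy with hy | hy
    · have h := Finset.mem_filter.mp hy
      exact ⟨(hY y h.1).1, h.2⟩
    · exact ⟨(hYt2a y hy).le, hltb y hy⟩
  obtain ⟨Yt, g, hlt2, hlta, hbij2, hiso2⟩ := (hchar a b hab).1 rab X (Y1 ∪ Yt2) hX hY1Yt2
  -- f maps Yt2 into Y2
  have hYt2notP : ∀ u ∈ Yt2, u ∉ P := by
    intro u hu hP
    exact lt_irrefl u (hlt1 u hP u hu)
  have hfYt2 : ∀ u ∈ Yt2, f u ∈ Y2 := by
    intro u hu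
    have huA : (u : Ordinal) ∈ (↑(P ∪ Yt2) : Set Ordinal) := by
      simp only [Finset.coe_union, Set.mem_union]; exact Or.inr hu
    have hfu := hbij1.mapsTo huA
    simp only [Finset.coe_union, Set.mem_union, Finset.mem_coe] at hfu
    rcases hfu with hfu | hfu
    · exfalso
      have h1 : f (f u) = f u := hfix _ hfu
      have h2 : (f u : Ordinal) ∈ (↑(P ∪ Yt2) : Set Ordinal) := by
        simp only [Finset.coe_union, Set.mem_union]; exact Or.inl hfu
      have := hbij1.injOn h2 huA h1
      exact hYt2notP u hu (this ▸ hfu)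
    · exact hfu
  -- restricted bijection of f from X ∪ (Y1 ∪ Yt2) to X ∪ Y
  have hmemP : ∀ x, x ∈ X ∪ Y1 → x ∈ P := by
    intro x hx
    rcases Finset.mem_union.mp hx with hx | hx
    · simp [hPdef, hx]
    · simp [hPdef, hx]
  have hf2 : Set.BijOn f ↑(X ∪ (Y1 ∪ Yt2)) ↑(X ∪ Y) := by
    refine ⟨?_, ?_, ?_⟩
    · intro u hu
      simp only [Finset.coe_union, Set.mem_union, Finset.mem_coe] at hu ⊢
      rcases hu with hu | hu | hu
      · rw [hfix u (hmemP u (Finset.mem_union_left _ hu))]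
        exact Or.inl hu
      · rw [hfix u (hmemP u (Finset.mem_union_right _ hu))]
        exact Or.inr (hYsplit ▸ Finset.mem_union_left _ hu)
      · exact Or.inr (hYsplit ▸ Finset.mem_union_right _ (hfYt2 u hu))
    · refine hbij1.injOn.mono ?_
      intro u hu
      simp only [Finset.coe_union, Set.mem_union, Finset.mem_coe] at hu ⊢
      rcases hu with hu | hu | hu
      · exact Or.inl (hmemP u (Finset.mem_union_left _ hu))
      · exact Or.inl (hmemP u (Finset.mem_union_right _ hu))
      · exact Or.inr hu
    · intro v hv
      simp only [Finset.coe_union, Set.mem_union, Finset.mem_coe] at hv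
      rcases hv with hv | hv
      · refine ⟨v, ?_, hfix v (hmemP v (Finset.mem_union_left _ hv))⟩
        simp only [Finset.coe_union, Set.mem_union, Finset.mem_coe]
        exact Or.inl hv
      · rw [← hYsplit] at hv
        rcases Finset.mem_union.mp hv with hv | hv
        · refine ⟨v, ?_, hfix v (hmemP v (Finset.mem_union_right _ hv))⟩
          simp only [Finset.coe_union, Set.mem_union, Finset.mem_coe]
          exact Or.inr (Or.inl hv)
        · obtain ⟨u, huA, huv⟩ := hbij1.surjOn (by
            simp only [Finset.coe_union, Set.mem_union, Finset.mem_coe]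
            exact Or.inr hv)
          simp only [Finset.coe_union, Set.mem_union, Finset.mem_coe] at huA
          rcases huA with huA | huA
          · exfalso
            rw [hfix u huA] at huv
            have := hPb u huA
            rw [huv] at this
            exact absurd this (not_lt.mpr (hY2c v hv).1)
          · refine ⟨u, ?_, huv⟩
            simp only [Finset.coe_union, Set.mem_union, Finset.mem_coe]
            exact Or.inr (Or.inr huA)
  refine ⟨Yt, f ∘ g, hlt2, hlta, hf2.comp hbij2, ?_⟩
  intro u hu w hw
  have hgu : g u ∈ X ∪ (Y1 ∪ Yt2) :=
    Finset.mem_coe.mp (hbij2.mapsTo (Finset.mem_coe.mpr hu))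
  have hgw : g w ∈ X ∪ (Y1 ∪ Yt2) :=
    Finset.mem_coe.mp (hbij2.mapsTo (Finset.mem_coe.mpr hw))
  have hguP : g u ∈ P ∪ Yt2 := by
    rcases Finset.mem_union.mp hgu with h | h
    · exact Finset.mem_union_left _ (hmemP _ (Finset.mem_union_left _ h))
    · rcases Finset.mem_union.mp h with h | h
      · exact Finset.mem_union_left _ (hmemP _ (Finset.mem_union_right _ h))
      · exact Finset.mem_union_right _ h
  have hgwP : g w ∈ P ∪ Yt2 := by
    rcases Finset.mem_union.mp hgw with h | h
    · exact Finset.mem_union_left _ (hmemP _ (Finset.mem_union_left _ h))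
    · rcases Finset.mem_union.mp h with h | h
      · exact Finset.mem_union_left _ (hmemP _ (Finset.mem_union_right _ h))
      · exact Finset.mem_union_right _ h
  constructor
  · rw [(hiso2 u hu w hw).1, (hiso1 (g u) hguP (g w) hgwP).1]
    rfl
  · rw [(hiso2 u hu w hw).2, (hiso1 (g u) hguP (g w) hgwP).2]
    rfl
end
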